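/- Let L = T be the translation family { t ↦ t + c : c ∈ ℝ }, and let μ be a Borel probability measure on ℝ. For any κ ∈ (0, 1/2), ε > 0 with κ + ε < 1/2, and r > 0: setting f := id - Lm(μ) (so Lm(f_*μ) = 0), we have min{r, pd(μ; 1-(κ+ε))} ≤ pd((b_r)_* f_* μ; 1-κ) + 2ε. In particular, T is extractable on (0, 1/2) with extraction estimate φ(κ, r) = r. -/

import Mathlib

open MeasureTheory Set Filter Topology
open scoped ENNReal

/-- The `α`-partial diameter of a Borel measure on `ℝ`. -/
noncomputable def partialDiam (μ : Measure ℝ) (α : ℝ) : ℝ≥0∞ :=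
  ⨅ I ∈ {I : Set ℝ | MeasurableSet I ∧ ENNReal.ofReal α ≤ μ I}, EMetric.diam I

/-- The Lévy mean `Lm(μ) = inf { m : μ((-∞, m]) ≥ 1/2 }`. -/
noncomputable def levyMean (μ : Measure ℝ) : ℝ :=
  sInf {m : ℝ | ENNReal.ofReal (1 / 2) ≤ μ (Set.Iic m)}

/-- The clipping function `b_r(t) = max (-r) (min t r)`. -/
def clip (r t : ℝ) : ℝ := max (-r) (min t r)

section aux

variable (μ : Measure ℝ) [IsProbabilityMeasure μ]

lemma levyS_nonempty : {m : ℝ | ENNReal.ofReal (1 / 2) ≤ μ (Set.Iic m)}.Nonempty := by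
  have h := tendsto_measure_Iic_atTop μ
  rw [measure_univ] at h
  exact (h.eventually_const_le (ENNReal.ofReal_lt_one.2 (by norm_num))).exists

lemma levyS_bddBelow : BddBelow {m : ℝ | ENNReal.ofReal (1 / 2) ≤ μ (Set.Iic m)} := by
  have h : Filter.Tendsto (fun n : ℕ => μ (Iic (-(n:ℝ)))) Filter.atTop (𝓝 0) := by
    have h0 : (⋂ n : ℕ, Iic (-(n:ℝ))) = ∅ := by
      ext x; simp only [mem_iInter, mem_Iic, mem_empty_iff_false, iff_false, not_forall, not_le]
      obtain ⟨n, hn⟩ := exists_nat_gt (-x)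
      exact ⟨n, by linarith⟩
    have := tendsto_measure_iInter_atTop (μ := μ) (s := fun n : ℕ => Iic (-(n:ℝ)))
      (fun n => measurableSet_Iic.nullMeasurableSet)
      (fun a b hab => Iic_subset_Iic.2 (by exact_mod_cast neg_le_neg (by exact_mod_cast hab)))
      ⟨0, measure_ne_top μ _⟩
    rw [h0, measure_empty] at this; exact this
  obtain ⟨n, hn⟩ := (h.eventually_lt_const (by norm_num : (0:ℝ≥0∞) < ENNReal.ofReal (1/2))).exists
  refine ⟨-(n:ℝ), fun m hm => ?_⟩
  by_contra hmn
  push_neg at hmn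
  exact absurd hm (not_le.2 (lt_of_le_of_lt (measure_mono (Iic_subset_Iic.2 hmn.le)) hn))

lemma levyMean_le_Iic : ENNReal.ofReal (1/2) ≤ μ (Iic (levyMean μ)) := by
  set c := levyMean μ with hc
  have hIic : Iic c = ⋂ n : ℕ, Iic (c + ((n:ℝ)+1)⁻¹) := by
    ext x
    simp only [mem_Iic, mem_iInter]
    constructor
    · intro h n; have : (0:ℝ) < ((n:ℝ)+1)⁻¹ := by positivity
      linarith
    · intro h
      by_contra hx
      push_neg at hx
      obtain ⟨n, hn⟩ := exists_nat_one_div_lt (sub_pos.2 hx)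
      have := h n
      rw [one_div] at hn
      linarith
  have key : ∀ n : ℕ, ENNReal.ofReal (1/2) ≤ μ (Iic (c + ((n:ℝ)+1)⁻¹)) := by
    intro n
    have hpos : (0:ℝ) < ((n:ℝ)+1)⁻¹ := by positivity
    have : c < c + ((n:ℝ)+1)⁻¹ := by linarith
    obtain ⟨m, hm, hmlt⟩ := (csInf_lt_iff (levyS_bddBelow μ) (levyS_nonempty μ)).1 this
    exact le_trans hm (measure_mono (Iic_subset_Iic.2 hmlt.le))
  have := tendsto_measure_iInter_atTop (μ := μ) (s := fun n : ℕ => Iic (c + ((n:ℝ)+1)⁻¹))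
    (fun n => measurableSet_Iic.nullMeasurableSet)
    (fun a b hab => Iic_subset_Iic.2 (by
      have : ((b:ℝ)+1)⁻¹ ≤ ((a:ℝ)+1)⁻¹ := by
        apply inv_anti₀ (by positivity)
        exact_mod_cast (by omega : a + 1 ≤ b + 1)
      linarith))
    ⟨0, measure_ne_top μ _⟩
  rw [← hIic] at this
  exact ge_of_tendsto' this key

lemma levyMean_Iio_le : μ (Iio (levyMean μ)) ≤ ENNReal.ofReal (1/2) := by
  set c := levyMean μ with hc
  have hIio : Iio c = ⋃ n : ℕ, Iic (c - ((n:ℝ)+1)⁻¹) := by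
    ext x
    simp only [mem_Iio, mem_iUnion, mem_Iic]
    constructor
    · intro h
      obtain ⟨n, hn⟩ := exists_nat_one_div_lt (sub_pos.2 h)
      rw [one_div] at hn
      exact ⟨n, by linarith⟩
    · rintro ⟨n, hn⟩
      have : (0:ℝ) < ((n:ℝ)+1)⁻¹ := by positivity
      linarith
  have key : ∀ n : ℕ, μ (Iic (c - ((n:ℝ)+1)⁻¹)) ≤ ENNReal.ofReal (1/2) := by
    intro n
    have hpos : (0:ℝ) < ((n:ℝ)+1)⁻¹ := by positivity
    by_contra h
    push_neg at h
    have hle : c ≤ c - ((n:ℝ)+1)⁻¹ := csInf_le (levyS_bddBelow μ) h.le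
    linarith
  have hmono : Monotone (fun n : ℕ => Iic (c - ((n:ℝ)+1)⁻¹)) := by
    intro a b hab
    apply Iic_subset_Iic.2
    have : ((b:ℝ)+1)⁻¹ ≤ ((a:ℝ)+1)⁻¹ := by
      apply inv_anti₀ (by positivity)
      exact_mod_cast (by omega : a + 1 ≤ b + 1)
    linarith
  have := tendsto_measure_iUnion_atTop (μ := μ) hmono
  rw [← hIio] at this
  exact le_of_tendsto' this key

end aux

theorem translations_extractable (μ : Measure ℝ) [IsProbabilityMeasure μ]
    (κ ε r : ℝ) (hκ : κ ∈ Set.Ioo (0 : ℝ) (1 / 2)) (hε : 0 < ε)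
    (hκε : κ + ε < 1 / 2) (hr : 0 < r) :
    min (ENNReal.ofReal r) (partialDiam μ (1 - (κ + ε))) ≤
      partialDiam ((μ.map (fun t => t - levyMean μ)).map (clip r)) (1 - κ) +
        ENNReal.ofReal (2 * ε) := by
  set c := levyMean μ with hc
  have hf : Measurable (fun t : ℝ => t - c) := measurable_id.sub_const c
  have hclip : Measurable (clip r) :=
    (continuous_const.max (continuous_id.min continuous_const)).measurable
  set ν := μ.map (fun t : ℝ => t - c) with hν
  have : IsProbabilityMeasure ν := Measure.isProbabilityMeasure_map hf.aemeasurable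
  set νb := ν.map (clip r) with hνb
  -- half-space bounds for ν
  have hν0 : ENNReal.ofReal (1/2) ≤ ν (Iic 0) := by
    rw [hν, Measure.map_apply hf measurableSet_Iic]
    have : (fun t : ℝ => t - c) ⁻¹' Iic 0 = Iic c := by
      ext t; simp [sub_nonpos]
    rw [this]
    exact levyMean_le_Iic μ
  have hνIio : ν (Iio 0) ≤ ENNReal.ofReal (1/2) := by
    rw [hν, Measure.map_apply hf measurableSet_Iio]
    have : (fun t : ℝ => t - c) ⁻¹' Iio 0 = Iio c := by
      ext t; simp [sub_neg]
    rw [this]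
    exact levyMean_Iio_le μ
  have hνIoi : ν (Ioi 0) ≤ ENNReal.ofReal (1/2) := by
    have hcompl : Ioi (0:ℝ) = (Iic 0)ᶜ := by simp
    rw [hcompl, measure_compl measurableSet_Iic (measure_ne_top ν _), measure_univ]
    calc 1 - ν (Iic 0) ≤ 1 - ENNReal.ofReal (1/2) := tsub_le_tsub_left hν0 1
      _ = ENNReal.ofReal (1/2) := by
          rw [show (1:ℝ≥0∞) = ENNReal.ofReal 1 by simp,
            ← ENNReal.ofReal_sub _ (by norm_num : (0:ℝ) ≤ 1/2)]
          norm_num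
  rcases le_or_gt (ENNReal.ofReal r) (partialDiam νb (1 - κ)) with h | h
  · exact le_trans (min_le_left _ _) (le_trans h le_self_add)
  · refine le_trans (min_le_right _ _) ?_
    have hDne : partialDiam νb (1 - κ) ≠ ⊤ := (h.trans ENNReal.ofReal_lt_top).ne
    have hlt : partialDiam νb (1 - κ) <
        min (ENNReal.ofReal r) (partialDiam νb (1 - κ) + ENNReal.ofReal (2*ε)) :=
      lt_min h (ENNReal.lt_add_right hDne
        (ne_of_gt (ENNReal.ofReal_pos.2 (by linarith))))
    obtain ⟨I, ⟨hImeas, hIμ⟩, hIdiam⟩ :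
        ∃ I, (MeasurableSet I ∧ ENNReal.ofReal (1 - κ) ≤ νb I) ∧
          EMetric.diam I <
            min (ENNReal.ofReal r) (partialDiam νb (1 - κ) + ENNReal.ofReal (2*ε)) := by
      have h2 : (⨅ I ∈ {I : Set ℝ | MeasurableSet I ∧ ENNReal.ofReal (1 - κ) ≤ νb I},
          EMetric.diam I) <
          min (ENNReal.ofReal r) (partialDiam νb (1 - κ) + ENNReal.ofReal (2*ε)) := hlt
      simp only [iInf_lt_iff, mem_setOf_eq] at h2
      obtain ⟨I, hI1, hI2⟩ := h2
      exact ⟨I, hI1, hI2⟩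
    have hpre : νb I = ν (clip r ⁻¹' I) := Measure.map_apply hclip hImeas
    have hdiamr : EMetric.diam I < ENNReal.ofReal r := hIdiam.trans_le (min_le_left _ _)
    have hκhalf : ¬ (ENNReal.ofReal (1 - κ) ≤ ENNReal.ofReal (1/2)) := by
      rw [ENNReal.ofReal_le_ofReal_iff (by norm_num)]
      intro hcon
      linarith [hκ.2]
    by_cases hrI : r ∈ I
    · exfalso
      have hsub : clip r ⁻¹' I ⊆ Ioi 0 := by
        intro t ht
        have h1 : edist (clip r t) r ≤ EMetric.diam I := EMetric.edist_le_diam_of_mem ht hrI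
        have h2 : dist (clip r t) r < r := by
          have h3 := h1.trans_lt hdiamr
          rw [edist_dist] at h3
          exact (ENNReal.ofReal_lt_ofReal_iff hr).1 h3
        rw [Real.dist_eq] at h2
        have h4 := (abs_lt.1 h2).1
        have hclippos : 0 < clip r t := by linarith
        simp only [mem_Ioi]
        by_contra ht0
        push_neg at ht0
        have : clip r t ≤ 0 := max_le (by linarith) (le_trans (min_le_left _ _) ht0)
        linarith
      exact hκhalf (hIμ.trans ((hpre ▸ (measure_mono hsub)).trans hνIoi))
    · by_cases hrI' : -r ∈ I
      · exfalso
        have hsub : clip r ⁻¹' I ⊆ Iio 0 := by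
          intro t ht
          have h1 : edist (clip r t) (-r) ≤ EMetric.diam I := EMetric.edist_le_diam_of_mem ht hrI'
          have h2 : dist (clip r t) (-r) < r := by
            have h3 := h1.trans_lt hdiamr
            rw [edist_dist] at h3
            exact (ENNReal.ofReal_lt_ofReal_iff hr).1 h3
          rw [Real.dist_eq] at h2
          have h4 := (abs_lt.1 h2).2
          have hclipneg : clip r t < 0 := by linarith
          simp only [mem_Iio]
          by_contra ht0
          push_neg at ht0
          have hmin : (0:ℝ) ≤ min t r := le_min ht0 hr.le
          have : (0:ℝ) ≤ clip r t := le_trans hmin (le_max_right _ _)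
          linarith
        exact hκhalf (hIμ.trans ((hpre ▸ (measure_mono hsub)).trans hνIio))
      · -- good case
        have hpreeq : clip r ⁻¹' I = I ∩ Ioo (-r) r := by
          ext t
          simp only [mem_preimage, mem_inter_iff, mem_Ioo]
          constructor
          · intro ht
            have hub : clip r t ≤ r := max_le (by linarith) (min_le_right _ _)
            have hlb : -r ≤ clip r t := le_max_left _ _
            have hne1 : clip r t ≠ r := fun hh => hrI (hh ▸ ht)
            have hne2 : clip r t ≠ -r := fun hh => hrI' (hh ▸ ht)
            have hlt1 : clip r t < r := lt_of_le_of_ne hub hne1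
            have hlt2 : -r < clip r t := lt_of_le_of_ne hlb (Ne.symm hne2)
            have htlt : t < r := by
              by_contra hh
              push_neg at hh
              have : clip r t = r := by
                unfold clip
                rw [min_eq_right hh, max_eq_right (by linarith)]
              exact absurd this hne1
            have htgt : -r < t := by
              by_contra hh
              push_neg at hh
              have : clip r t = -r := by
                unfold clip
                rw [min_eq_left (by linarith), max_eq_left hh]
              exact absurd this hne2
            have heq : clip r t = t := by
              unfold clip
              rw [min_eq_left htlt.le, max_eq_right htgt.le]
            exact ⟨heq ▸ ht, htgt, htlt⟩
          · rintro ⟨htI, h1, h2⟩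
            have heq : clip r t = t := by
              unfold clip
              rw [min_eq_left h2.le, max_eq_right h1.le]
            show clip r t ∈ I
            rw [heq]; exact htI
        set J := I ∩ Ioo (-r) r with hJ
        have hJmeas : MeasurableSet J := hImeas.inter measurableSet_Ioo
        have hμJ : ENNReal.ofReal (1 - (κ + ε)) ≤ μ ((fun t : ℝ => t - c) ⁻¹' J) := by
          have h1 : ν J = μ ((fun t : ℝ => t - c) ⁻¹' J) := Measure.map_apply hf hJmeas
          rw [← h1, ← hpreeq, ← hpre]
          exact le_trans (ENNReal.ofReal_le_ofReal (by linarith)) hIμ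
        have hdiameq : EMetric.diam ((fun t : ℝ => t - c) ⁻¹' J) = EMetric.diam J := by
          have himg : (fun t : ℝ => t - c) ⁻¹' J = (fun t : ℝ => t + c) '' J := by
            ext t
            simp only [mem_preimage, mem_image]
            constructor
            · intro ht; exact ⟨t - c, ht, by ring⟩
            · rintro ⟨s, hs, rfl⟩; simpa using hs
          rw [himg]
          exact (Isometry.of_dist_eq fun a b => dist_add_right a b c).ediam_image J
        calc partialDiam μ (1 - (κ + ε)) ≤ EMetric.diam ((fun t : ℝ => t - c) ⁻¹' J) :=
              iInf₂_le _ ⟨hf hJmeas, hμJ⟩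
          _ = EMetric.diam J := hdiameq
          _ ≤ EMetric.diam I := EMetric.diam_mono inter_subset_left
          _ ≤ partialDiam νb (1 - κ) + ENNReal.ofReal (2*ε) :=
              le_of_lt (hIdiam.trans_le (min_le_right _ _))
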